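/- Let P be a k-profile of a limit-closed universe of bipartitions with order function λ, and let (Q_α)_{α<κ} be an increasing chain of sets in P whose union Q is not in P. Then for every set S of finite order there is a cofinal set F ⊆ κ such that λ((S ∩ Q) ∪ Q_α) ≤ k−1 and λ(((E\S) ∩ Q) ∪ Q_α) ≤ k−1 for all α ∈ F. -/

import Mathlib

open Set

/-- A symmetric set function: `λ(A) = λ(E \ A)`. -/
def SymmFn {E : Type*} (lam : Set E → ℕ∞) : Prop := ∀ A : Set E, lam Aᶜ = lam A

/-- A submodular set function: `λ(A) + λ(B) ≥ λ(A ∪ B) + λ(A ∩ B)`. -/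
def SubmodularFn {E : Type*} (lam : Set E → ℕ∞) : Prop :=
  ∀ A B : Set E, lam (A ∪ B) + lam (A ∩ B) ≤ lam A + lam B

/-- A limit-closed set function: the union of a (nonempty) chain of sets of connectivity at most
`k` again has connectivity at most `k`. -/
def LimitClosedFn {E : Type*} (lam : Set E → ℕ∞) : Prop :=
  ∀ (k : ℕ) (C : Set (Set E)), C.Nonempty → IsChain (· ⊆ ·) C →
    (∀ A ∈ C, lam A ≤ (k : ℕ∞)) → lam (⋃₀ C) ≤ (k : ℕ∞)

/-- A profile for the connectivity system `(E, lam)` of the sets satisfying the eligibility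
predicate `ord`: a consistent (downward-closed) orientation of the eligible sets satisfying the
profile property. -/
def IsProfileOn {E : Type*} (ord : Set E → Prop) (P : Set (Set E)) : Prop :=
  (∀ A ∈ P, ord A) ∧
  (∀ A : Set E, ord A → (A ∈ P ↔ Aᶜ ∉ P)) ∧
  (∀ A B : Set E, ord A → A ⊆ B → B ∈ P → A ∈ P) ∧
  (∀ A ∈ P, ∀ B ∈ P, (A ∪ B)ᶜ ∉ P)

/-- Pigeonhole: a ℕ-valued function bounded on a cofinal set takes some value cofinally. -/
lemma aux_pigeonhole {ι : Type*} [LinearOrder ι] [Nonempty ι] (C : Set ι)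
    (hC : ∀ a, ∃ b ∈ C, a ≤ b) (f : ι → ℕ) (N : ℕ) (hf : ∀ a ∈ C, f a ≤ N) :
    ∃ m : ℕ, ∀ a, ∃ b ∈ C, a ≤ b ∧ f b = m := by
  by_contra h
  push_neg at h
  choose g hg using h
  obtain ⟨b0, hb0⟩ := ((Finset.range (N + 1)).image g).exists_le
  obtain ⟨b, hbC, hb⟩ := hC b0
  refine hg (f b) b hbC (le_trans (hb0 _ ?_) hb) rfl
  exact Finset.mem_image_of_mem g (Finset.mem_range.mpr (Nat.lt_succ_of_le (hf b hbC)))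

lemma aux_side {E ι : Type*} [LinearOrder ι] [Nonempty ι]
    (lam : Set E → ℕ∞) (hsub : SubmodularFn lam) (hlim : LimitClosedFn lam)
    (k : ℕ) (Q : ι → Set E) (hmono : Monotone Q)
    (hQ : ∀ α, lam (Q α) ≤ ((k - 1 : ℕ) : ℕ∞))
    (C : Set ι) (hC : ∀ a, ∃ b ∈ C, a ≤ b)
    (S : Set E) (hS : lam S < ⊤) :
    ∃ F : Set ι, F ⊆ C ∧ (∀ a, ∃ b ∈ F, a ≤ b) ∧
      ∀ α ∈ F, lam ((S ∩ ⋃ γ, Q γ) ∪ Q α) ≤ ((k - 1 : ℕ) : ℕ∞) := by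
  -- each lam (S ∩ Q α) is finite and bounded
  have hbd : ∀ α, lam (S ∩ Q α) ≤ lam S + ((k - 1 : ℕ) : ℕ∞) := fun α =>
    le_trans (le_trans (self_le_add_left _ _) (hsub S (Q α)))
      (add_le_add le_rfl (hQ α))
  have hne : ∀ α, lam (S ∩ Q α) ≠ ⊤ := fun α =>
    ne_top_of_le_ne_top (WithTop.add_ne_top.mpr ⟨hS.ne, ENat.coe_ne_top _⟩) (hbd α)
  obtain ⟨n, hn⟩ := WithTop.ne_top_iff_exists.mp hS.ne
  have hfb : ∀ a ∈ C, (lam (S ∩ Q a)).toNat ≤ n + (k - 1) := by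
    intro a _
    refine ENat.toNat_le_of_le_coe ?_
    refine le_trans (hbd a) ?_
    rw [← hn]
    push_cast
    rfl
  obtain ⟨m, hm⟩ := aux_pigeonhole C hC (fun a => (lam (S ∩ Q a)).toNat) (n + (k - 1)) hfb
  refine ⟨{a ∈ C | (lam (S ∩ Q a)).toNat = m}, fun a ha => ha.1,
    fun a => (hm a).imp fun b hb => ⟨⟨hb.1, hb.2.2⟩, hb.2.1⟩, ?_⟩
  set F : Set ι := {a ∈ C | (lam (S ∩ Q a)).toNat = m} with hF
  have hcof : ∀ a, ∃ b ∈ F, a ≤ b := fun a => (hm a).imp fun b hb => ⟨⟨hb.1, hb.2.2⟩, hb.2.1⟩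
  have hval : ∀ a ∈ F, lam (S ∩ Q a) = (m : ℕ∞) := by
    intro a ha
    rw [← ha.2, ENat.coe_toNat (hne a)]
  -- union over F is the full union
  have hUF : ⋃ a ∈ F, Q a = ⋃ γ, Q γ := by
    apply subset_antisymm (iUnion₂_subset fun a _ => subset_iUnion Q a)
    refine iUnion_subset fun γ => ?_
    obtain ⟨b, hbF, hb⟩ := hcof γ
    exact subset_trans (hmono hb) (subset_iUnion₂ (s := fun i (_ : i ∈ F) => Q i) b hbF)
  -- limit-closedness on the chain of S ∩ Q a, a ∈ F
  have hSQ : lam (S ∩ ⋃ γ, Q γ) ≤ (m : ℕ∞) := by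
    have hch : IsChain (· ⊆ ·) ((fun a => S ∩ Q a) '' F) := by
      rintro _ ⟨a, -, rfl⟩ _ ⟨b, -, rfl⟩ -
      rcases le_total a b with h | h
      · exact Or.inl (inter_subset_inter_right _ (hmono h))
      · exact Or.inr (inter_subset_inter_right _ (hmono h))
    have hnonempty : ((fun a => S ∩ Q a) '' F).Nonempty := by
      obtain ⟨b, hbF, -⟩ := hcof (Classical.arbitrary ι)
      exact ⟨_, mem_image_of_mem _ hbF⟩
    have := hlim m _ hnonempty hch (by rintro _ ⟨a, haF, rfl⟩; exact (hval a haF).le)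
    rwa [sUnion_image, ← inter_iUnion₂, hUF] at this
  intro α hα
  have hkey := hsub (S ∩ ⋃ γ, Q γ) (Q α)
  have hint : (S ∩ ⋃ γ, Q γ) ∩ Q α = S ∩ Q α := by
    rw [inter_assoc, inter_eq_right.mpr (subset_iUnion Q α)]
  rw [hint, hval α hα] at hkey
  have h2 : lam ((S ∩ ⋃ γ, Q γ) ∪ Q α) + (m : ℕ∞) ≤ ((k - 1 : ℕ) : ℕ∞) + (m : ℕ∞) := by
    calc lam ((S ∩ ⋃ γ, Q γ) ∪ Q α) + (m : ℕ∞) ≤ lam (S ∩ ⋃ γ, Q γ) + lam (Q α) := hkey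
    _ ≤ (m : ℕ∞) + ((k - 1 : ℕ) : ℕ∞) := add_le_add hSQ (hQ α)
    _ = ((k - 1 : ℕ) : ℕ∞) + (m : ℕ∞) := add_comm _ _
  exact (WithTop.add_le_add_iff_right (by simp : (m:ℕ∞) ≠ ⊤)).mp h2

/-- Given a `k`-profile `P` and an increasing chain `(Q α)` of members of `P` whose union is not
in `P`, for every set `S` of finite order there is a cofinal set of indices `α` with
`λ((S ∩ Q) ∪ Q α) ≤ k - 1` and `λ((Sᶜ ∩ Q) ∪ Q α) ≤ k - 1`, where `Q = ⋃ α, Q α`. -/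
theorem stmt12 {E : Type*} {ι : Type*} [LinearOrder ι] [WellFoundedLT ι] [Nonempty ι]
    (lam : Set E → ℕ∞)
    (hsym : SymmFn lam) (hsub : SubmodularFn lam) (hlim : LimitClosedFn lam)
    (k : ℕ) (hk : 1 ≤ k)
    (P : Set (Set E)) (hP : IsProfileOn (fun A => lam A < (k : ℕ∞)) P)
    (Q : ι → Set E) (hmono : Monotone Q) (hmem : ∀ α, Q α ∈ P)
    (hsup : (⋃ α, Q α) ∉ P)
    (S : Set E) (hS : lam S < ⊤) :
    ∃ F : Set ι, (∀ α, ∃ β ∈ F, α ≤ β) ∧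
      ∀ α ∈ F, lam ((S ∩ ⋃ γ, Q γ) ∪ Q α) ≤ ((k - 1 : ℕ) : ℕ∞) ∧
        lam ((Sᶜ ∩ ⋃ γ, Q γ) ∪ Q α) ≤ ((k - 1 : ℕ) : ℕ∞) := by
  have hQ : ∀ α, lam (Q α) ≤ ((k - 1 : ℕ) : ℕ∞) := by
    intro α
    have h : lam (Q α) < (k : ℕ∞) := hP.1 _ (hmem α)
    have hkk : (k : ℕ∞) = ((k - 1 : ℕ) : ℕ∞) + 1 := by
      exact_mod_cast (Nat.sub_add_cancel hk).symm
    rw [hkk] at h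
    exact Order.le_of_lt_add_one h
  obtain ⟨F, -, hFcof, hF⟩ := aux_side lam hsub hlim k Q hmono hQ univ
    (fun a => ⟨a, mem_univ a, le_rfl⟩) S hS
  have hS' : lam Sᶜ < ⊤ := by rw [hsym]; exact hS
  obtain ⟨F', hF'sub, hF'cof, hF'⟩ := aux_side lam hsub hlim k Q hmono hQ F hFcof Sᶜ hS'
  exact ⟨F', hF'cof, fun α hα => ⟨hF α (hF'sub hα), hF' α hα⟩⟩
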